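/- Let {T^k}_{k∈ℕ} be a sequence of independent Bernoulli random variables with ℙ(T^k = 1) ≥ 1 − δ ≥ 1/2 for all k. Let S^n = ∑_{k=0}^{n−1} T^k and let K be a stopping time for {S^n} with 𝔼[K] < ∞. Then for any γ ∈ (0, 1) and any E ∈ ℕ, ℙ((1 − γ)·K ≥ 2·S^K + γ(1 − γ²)·E) ≤ e^{−γ²·E}. -/

import Mathlib

open MeasureTheory ProbabilityTheory
open Filter

lemma stmt_2_scalar {γ : ℝ} (h0 : 0 < γ) (h1 : γ < 1) :
    Real.exp (γ / (1 - γ ^ 2) * (1 - γ)) + Real.exp (-(γ / (1 - γ ^ 2) * (1 + γ))) ≤ 2 := by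
  have hsq : (0:ℝ) < 1 - γ ^ 2 := by nlinarith
  have ha : γ / (1 - γ ^ 2) * (1 - γ) = γ / (1 + γ) := by
    rw [div_mul_eq_mul_div, div_eq_div_iff hsq.ne' (by linarith : (1:ℝ) + γ ≠ 0)]; ring
  have hb : γ / (1 - γ ^ 2) * (1 + γ) = γ / (1 - γ) := by
    rw [div_mul_eq_mul_div, div_eq_div_iff hsq.ne' (by linarith : (1:ℝ) - γ ≠ 0)]; ring
  rw [ha, hb]
  have hA : Real.exp (γ / (1 + γ)) ≤ 1 + γ := by
    have h := Real.add_one_le_exp (-(γ / (1 + γ)))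
    have h2 : (1:ℝ) - γ/(1+γ) = 1/(1+γ) := by field_simp; ring
    have he : Real.exp (γ/(1+γ)) * Real.exp (-(γ/(1+γ))) = 1 := by
      rw [← Real.exp_add, add_neg_cancel, Real.exp_zero]
    have h3 := mul_le_mul_of_nonneg_left h (Real.exp_pos (γ/(1+γ))).le
    rw [he] at h3
    have h4 : Real.exp (γ/(1+γ)) * (-(γ / (1 + γ)) + 1) = Real.exp (γ/(1+γ)) * (1/(1+γ)) := by
      rw [← h2]; ring
    rw [h4] at h3
    rw [mul_one_div, div_le_one (by linarith)] at h3
    exact h3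
  have hB : Real.exp (-(γ / (1 - γ))) ≤ 1 - γ := by
    have h := Real.add_one_le_exp (γ / (1 - γ))
    have h2 : (1:ℝ) + γ/(1-γ) = 1/(1-γ) := by
      have hne : (1:ℝ) - γ ≠ 0 := by linarith
      field_simp
      ring
    have he : Real.exp (γ/(1-γ)) * Real.exp (-(γ/(1-γ))) = 1 := by
      rw [← Real.exp_add, add_neg_cancel, Real.exp_zero]
    have h3 := mul_le_mul_of_nonneg_left h (Real.exp_pos (-(γ/(1-γ)))).le
    rw [mul_comm (Real.exp (γ/(1-γ)))] at he
    rw [he] at h3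
    have h4 : Real.exp (-(γ/(1-γ))) * (γ / (1 - γ) + 1) = Real.exp (-(γ/(1-γ))) * (1/(1-γ)) := by
      rw [← h2]; ring
    rw [h4, mul_one_div, div_le_one (by linarith)] at h3
    exact h3
  linarith


/-- Chernoff bound for stopping times. -/
theorem stmt_2 {Ω : Type*} [MeasurableSpace Ω] (μ : Measure Ω) [IsProbabilityMeasure μ]
    (T : ℕ → Ω → ℝ) (hmeas : ∀ k, Measurable (T k))
    (hindep : iIndepFun T μ)
    (hBer : ∀ k ω, T k ω ∈ ({0, 1} : Set ℝ))
    (δ : ℝ) (hδ : 1 - δ ≥ 1 / 2)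
    (hp : ∀ k, (μ {ω | T k ω = 1}).toReal ≥ 1 - δ)
    (S : ℕ → Ω → ℝ) (hS : ∀ n ω, S n ω = ∑ k ∈ Finset.range n, T k ω)
    (K : Ω → ℕ) (hKmeas : Measurable K)
    (hstop : ∀ k n : ℕ, k ≤ n →
      IndepFun (fun ω => Set.indicator {ω' | k < K ω'} (fun _ => (1 : ℝ)) ω) (S n) μ)
    (hKint : Integrable (fun ω => (K ω : ℝ)) μ)
    (γ : ℝ) (hγ : γ ∈ Set.Ioo (0 : ℝ) 1) (E : ℕ) :
    (μ {ω | (1 - γ) * (K ω : ℝ) ≥ 2 * S (K ω) ω + γ * (1 - γ ^ 2) * (E : ℝ)}).toReal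
      ≤ Real.exp (-γ ^ 2 * (E : ℝ)) := by
  obtain ⟨hγ0, hγ1⟩ := hγ
  have hsq : (0:ℝ) < 1 - γ ^ 2 := by nlinarith
  set l : ℝ := γ / (1 - γ ^ 2) with hldef
  have hl0 : 0 < l := div_pos hγ0 hsq
  have hlγ : l * (1 - γ ^ 2) = γ := div_mul_cancel₀ γ hsq.ne'
  have hT0 : ∀ k ω, 0 ≤ T k ω := by
    intro k ω
    rcases hBer k ω with h | h
    · rw [h]
    · rw [Set.mem_singleton_iff.1 h]; norm_num
  have hS0 : ∀ n ω, 0 ≤ S n ω := fun n ω => by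
    rw [hS]; exact Finset.sum_nonneg fun k _ => hT0 k ω
  have hSmeas : ∀ n, Measurable (S n) := by
    intro n
    have h : S n = fun ω => ∑ k ∈ Finset.range n, T k ω := funext fun ω => hS n ω
    rw [h]; exact Finset.measurable_sum _ fun k _ => hmeas k
  set X : ℕ → Ω → ℝ := fun n ω => Real.exp (l * ((n:ℝ) - 2 * S n ω - γ * n)) with hXdef
  have hXmeas : ∀ n, Measurable (X n) := by
    intro n
    exact (((measurable_const.sub ((hSmeas n).const_mul 2)).sub measurable_const).const_mul l).exp
  have hXpos : ∀ n ω, 0 < X n ω := fun n ω => Real.exp_pos _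
  have hXbd : ∀ n m ω, m ≤ n → X m ω ≤ Real.exp (l * n) := by
    intro n m ω hmn
    apply Real.exp_le_exp.2
    have h1 : (m:ℝ) - 2 * S m ω - γ * m ≤ (n:ℝ) := by
      have := hS0 m ω
      have hm : (m:ℝ) ≤ (n:ℝ) := by exact_mod_cast hmn
      nlinarith
    exact mul_le_mul_of_nonneg_left h1 hl0.le
  have hXint : ∀ n, Integrable (X n) μ := by
    intro n
    apply Integrable.mono' (integrable_const (Real.exp (l * n))) (hXmeas n).aestronglyMeasurable
    filter_upwards with ω
    rw [Real.norm_eq_abs, abs_of_pos (hXpos n ω)]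
    exact hXbd n n ω le_rfl
  -- the deterministic function giving X from S
  have hXS : ∀ n, X n = (fun s : ℝ => Real.exp (l * ((n:ℝ) - 2 * s - γ * n))) ∘ S n := by
    intro n; rfl
  have hFmeas : ∀ n : ℕ, Measurable (fun s : ℝ => Real.exp (l * ((n:ℝ) - 2 * s - γ * n))) := by
    intro n
    exact (((measurable_const.sub (measurable_id.const_mul 2)).sub measurable_const).const_mul l).exp
  set a : ℕ → ℝ := fun n => ∫ ω, X n ω ∂μ with hadef
  have ha0 : a 0 = 1 := by
    have h : X 0 = fun _ => (1:ℝ) := by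
      funext ω
      simp only [hXdef]
      rw [hS 0 ω]
      norm_num
    rw [hadef]
    simp only [h]
    simp
  have hannex : ∀ n, 0 ≤ a n := fun n => integral_nonneg fun ω => (hXpos n ω).le
  have hgmeas : ∀ n : ℕ, Measurable (fun ω => Real.exp (l * (1 - 2 * T n ω - γ))) := fun n =>
    (((measurable_const.sub ((hmeas n).const_mul 2)).sub measurable_const).const_mul l).exp
  have hkey : ∀ n : ℕ, ∫ ω, Real.exp (l * (1 - 2 * T n ω - γ)) ∂μ ≤ 1 := by
    intro n
    set c1 : ℝ := Real.exp (l * (1 - 2 * 1 - γ)) with hc1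
    set c0 : ℝ := Real.exp (l * (1 - 2 * 0 - γ)) with hc0
    have hmeas1 : MeasurableSet {ω | T n ω = 1} := hmeas n (measurableSet_singleton 1)
    have hmeas0 : MeasurableSet {ω | T n ω = 0} := hmeas n (measurableSet_singleton 0)
    have hcompl : {ω | T n ω = 1}ᶜ = {ω | T n ω = 0} := by
      ext ω
      simp only [Set.mem_compl_iff, Set.mem_setOf_eq]
      rcases hBer n ω with h | h
      · simp [h]
      · rw [Set.mem_singleton_iff] at h
        simp [h]
    have hpt : (fun ω => Real.exp (l * (1 - 2 * T n ω - γ)))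
        = fun ω => Set.indicator {ω' | T n ω' = 1} (fun _ => c1) ω
          + Set.indicator {ω' | T n ω' = 0} (fun _ => c0) ω := by
      funext ω
      rcases hBer n ω with h | h
      · have h0 : ω ∈ {ω' | T n ω' = 0} := h
        have h1 : ω ∉ {ω' | T n ω' = 1} := by
          simp only [Set.mem_setOf_eq, h]; norm_num
        rw [Set.indicator_of_notMem h1, Set.indicator_of_mem h0, hc0, h]
        ring_nf
      · rw [Set.mem_singleton_iff] at h
        have h1 : ω ∈ {ω' | T n ω' = 1} := h
        have h0 : ω ∉ {ω' | T n ω' = 0} := by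
          simp only [Set.mem_setOf_eq, h]; norm_num
        rw [Set.indicator_of_mem h1, Set.indicator_of_notMem h0, hc1, h]
        ring_nf
    rw [hpt, integral_add ((integrable_const c1).indicator hmeas1) ((integrable_const c0).indicator hmeas0),
      integral_indicator_const _ hmeas1, integral_indicator_const _ hmeas0]
    have hP1 : μ {ω | T n ω = 0} = 1 - μ {ω | T n ω = 1} := by
      rw [← hcompl, prob_compl_eq_one_sub hmeas1]
    have hple : μ {ω | T n ω = 1} ≤ 1 := prob_le_one
    have hPt : (μ {ω | T n ω = 0}).toReal = 1 - (μ {ω | T n ω = 1}).toReal := by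
      rw [hP1, ENNReal.toReal_sub_of_le hple ENNReal.one_ne_top, ENNReal.toReal_one]
    rw [measureReal_def, measureReal_def, hPt]
    set p : ℝ := (μ {ω | T n ω = 1}).toReal with hpdef
    have hp1 : p ≤ 1 := by
      rw [hpdef]
      exact ENNReal.toReal_le_of_le_ofReal one_pos.le (by simpa using hple)
    have hphalf : (1:ℝ)/2 ≤ p := le_trans hδ (hp n)
    have hc1le : c1 ≤ c0 := by
      rw [hc1, hc0]
      apply Real.exp_le_exp.2
      apply mul_le_mul_of_nonneg_left (by norm_num) hl0.le
    have hsum : c0 + c1 ≤ 2 := by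
      have := stmt_2_scalar hγ0 hγ1
      rw [hc0, hc1, hldef]
      have e1 : γ / (1 - γ ^ 2) * (1 - 2 * (1:ℝ) - γ) = -(γ / (1 - γ ^ 2) * (1 + γ)) := by ring
      have e2 : γ / (1 - γ ^ 2) * (1 - 2 * (0:ℝ) - γ) = γ / (1 - γ ^ 2) * (1 - γ) := by ring
      rw [e1, e2]
      linarith
    have hc1pos : 0 < c1 := Real.exp_pos _
    simp only [smul_eq_mul]
    nlinarith [mul_le_mul_of_nonneg_right hphalf (sub_nonneg.2 hc1le)]
  have hindST : ∀ n : ℕ, IndepFun (S n) (T n) μ := by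
    intro n
    have h := hindep.indepFun_finsetSum_of_notMem hmeas (Finset.notMem_range_self (n := n))
    have he : (∑ j ∈ Finset.range n, T j) = S n := by
      funext ω
      rw [hS n ω, Finset.sum_apply]
    rwa [he] at h
  have hamono : ∀ n : ℕ, a (n + 1) ≤ a n := by
    intro n
    have hXsucc : ∀ ω, X (n+1) ω = X n ω * Real.exp (l * (1 - 2 * T n ω - γ)) := by
      intro ω
      simp only [hXdef]
      rw [← Real.exp_add]
      congr 1
      have hSn : S (n+1) ω = S n ω + T n ω := by
        rw [hS (n+1) ω, hS n ω, Finset.sum_range_succ]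
      rw [hSn]
      push_cast
      ring
    have hInd : IndepFun (X n) (fun ω => Real.exp (l * (1 - 2 * T n ω - γ))) μ := by
      have h := (hindST n).comp (hFmeas n)
        ((((measurable_const.sub (measurable_id.const_mul 2)).sub measurable_const).const_mul l).exp
          : Measurable fun t : ℝ => Real.exp (l * (1 - 2 * t - γ)))
      exact h
    have hmul := hInd.integral_fun_mul_eq_mul_integral (hXmeas n).aestronglyMeasurable (hgmeas n).aestronglyMeasurable
    have he : a (n+1) = a n * ∫ ω, Real.exp (l * (1 - 2 * T n ω - γ)) ∂μ := by
      have h1 : a (n+1) = ∫ ω, X n ω * Real.exp (l * (1 - 2 * T n ω - γ)) ∂μ := by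
        rw [hadef]
        exact integral_congr_ae (Filter.Eventually.of_forall hXsucc)
      rw [h1, hadef]
      exact hmul
    rw [he]
    calc a n * ∫ ω, Real.exp (l * (1 - 2 * T n ω - γ)) ∂μ ≤ a n * 1 :=
          mul_le_mul_of_nonneg_left (hkey n) (hannex n)
      _ = a n := mul_one _
  set Y : ℕ → Ω → ℝ := fun n ω => X (min (K ω) n) ω with hYdef
  have hminmeas : ∀ n : ℕ, Measurable fun ω => min (K ω) n := fun n =>
    (measurable_from_top (f := fun k : ℕ => min k n)).comp hKmeas
  have hYeq : ∀ n : ℕ, Y n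
      = fun ω => ∑ m ∈ Finset.range (n+1), if min (K ω) n = m then X m ω else 0 := by
    intro n
    funext ω
    rw [hYdef]
    rw [Finset.sum_ite_eq]
    rw [if_pos (Finset.mem_range.2 (Nat.lt_succ_of_le (min_le_right _ _)))]
  have hYmeas : ∀ n, Measurable (Y n) := by
    intro n
    rw [hYeq n]
    apply Finset.measurable_sum
    intro m _
    exact Measurable.ite ((hminmeas n) (measurableSet_singleton m)) (hXmeas m) measurable_const
  have hYnn : ∀ n ω, 0 ≤ Y n ω := fun n ω => (hXpos _ ω).le
  have hYint : ∀ n, Integrable (Y n) μ := by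
    intro n
    apply Integrable.mono' (integrable_const (Real.exp (l * n))) (hYmeas n).aestronglyMeasurable
    filter_upwards with ω
    rw [Real.norm_eq_abs, abs_of_nonneg (hYnn n ω)]
    exact hXbd n (min (K ω) n) ω (min_le_right _ _)
  have hsetK : ∀ n : ℕ, MeasurableSet {ω' | n < K ω'} :=
    fun n => hKmeas (show MeasurableSet {m : ℕ | n < m} from trivial)
  have hbsucc : ∀ n : ℕ, (∫ ω, Y (n+1) ω ∂μ) ≤ ∫ ω, Y n ω ∂μ := by
    intro n
    set ind : Ω → ℝ := fun ω => Set.indicator {ω' | n < K ω'} (fun _ => (1:ℝ)) ω with hinddef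
    have hindmeas : Measurable ind := measurable_const.indicator (hsetK n)
    have hindvals : ∀ ω, ind ω = 0 ∨ ind ω = 1 := by
      intro ω
      by_cases h : ω ∈ {ω' | n < K ω'}
      · right; exact Set.indicator_of_mem h _
      · left; exact Set.indicator_of_notMem h _
    have hindbd : ∀ ω, ‖ind ω‖ ≤ 1 := by
      intro ω
      rcases hindvals ω with h | h <;> rw [h] <;> norm_num
    have hptw : ∀ ω, Y (n+1) ω = Y n ω + (X (n+1) ω - X n ω) * ind ω := by
      intro ω
      have e2 : Y (n+1) ω = X (min (K ω) (n+1)) ω := rfl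
      have e1 : Y n ω = X (min (K ω) n) ω := rfl
      rw [e1, e2]
      by_cases h : n < K ω
      · rw [min_eq_right (by omega : n ≤ K ω), min_eq_right (by omega : n + 1 ≤ K ω)]
        have hv : ind ω = 1 := Set.indicator_of_mem (show ω ∈ {ω' | n < K ω'} from h) _
        rw [hv]
        ring
      · rw [min_eq_left (by omega : K ω ≤ n), min_eq_left (by omega : K ω ≤ n + 1)]
        have hv : ind ω = 0 := Set.indicator_of_notMem (show ω ∉ {ω' | n < K ω'} from h) _
        rw [hv]
        ring
    have hXindint : ∀ m : ℕ, Integrable (fun ω => X m ω * ind ω) μ := by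
      intro m
      have := (hXint m).bdd_mul hindmeas.aestronglyMeasurable (c := 1) (Filter.Eventually.of_forall hindbd)
      -- this : Integrable (ind * X m)
      have heq : (fun ω => X m ω * ind ω) = ind * X m := by
        funext ω; simp [mul_comm]
      rw [heq]
      exact this
    have hii : ∀ m : ℕ, n ≤ m →
        ∫ ω, X m ω * ind ω ∂μ = a m * (μ {ω' | n < K ω'}).toReal := by
      intro m hm
      have hI : IndepFun ind (X m) μ := by
        have h := (hstop n m hm).comp (measurable_id (α := ℝ)) (hFmeas m)
        exact h
      have hmul := hI.symm.integral_fun_mul_eq_mul_integral (hXmeas m).aestronglyMeasurable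
        hindmeas.aestronglyMeasurable
      have hindint : ∫ ω, ind ω ∂μ = (μ {ω' | n < K ω'}).toReal := by
        rw [hinddef]
        rw [integral_indicator_const _ (hsetK n)]
        simp [measureReal_def]
      rw [← hindint, hadef]
      exact hmul
    have hsplit : ∫ ω, Y (n+1) ω ∂μ
        = (∫ ω, Y n ω ∂μ) + ((∫ ω, X (n+1) ω * ind ω ∂μ) - ∫ ω, X n ω * ind ω ∂μ) := by
      have h1 : ∫ ω, Y (n+1) ω ∂μ
          = ∫ ω, (Y n ω + (X (n+1) ω * ind ω - X n ω * ind ω)) ∂μ := by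
        apply integral_congr_ae
        filter_upwards with ω
        rw [hptw ω]
        ring
      have hsubint : Integrable (fun ω => X (n+1) ω * ind ω - X n ω * ind ω) μ :=
        (hXindint (n+1)).sub (hXindint n)
      rw [h1, integral_add (hYint n) hsubint, integral_sub (hXindint (n+1)) (hXindint n)]
    rw [hsplit, hii (n+1) (by omega), hii n le_rfl]
    have hq : 0 ≤ (μ {ω' | n < K ω'}).toReal := ENNReal.toReal_nonneg
    nlinarith [hamono n]
  have hble : ∀ n, ∫ ω, Y n ω ∂μ ≤ 1 := by
    intro n
    induction n with
    | zero =>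
      have h : Y 0 = X 0 := by
        funext ω
        rw [hYdef]
        norm_num
      rw [h]
      rw [hadef] at ha0
      exact le_of_eq ha0
    | succ n ih => exact le_trans (hbsucc n) ih
  have hlim : ∀ ω, Tendsto (fun n => ENNReal.ofReal (Y n ω)) atTop
      (nhds (ENNReal.ofReal (X (K ω) ω))) := by
    intro ω
    apply tendsto_atTop_of_eventually_const (i₀ := K ω)
    intro n hn
    have h : Y n ω = X (K ω) ω := by
      show X (min (K ω) n) ω = X (K ω) ω
      rw [min_eq_left hn]
    rw [h]
  have heq : (fun ω => ENNReal.ofReal (X (K ω) ω))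
      = fun ω => Filter.liminf (fun n => ENNReal.ofReal (Y n ω)) atTop := by
    funext ω
    exact ((hlim ω).liminf_eq).symm
  have hYlint : ∀ n, ∫⁻ ω, ENNReal.ofReal (Y n ω) ∂μ ≤ 1 := by
    intro n
    rw [← ofReal_integral_eq_lintegral_ofReal (hYint n) (Filter.Eventually.of_forall (hYnn n))]
    calc ENNReal.ofReal (∫ ω, Y n ω ∂μ) ≤ ENNReal.ofReal 1 := ENNReal.ofReal_le_ofReal (hble n)
      _ = 1 := ENNReal.ofReal_one
  have hfatou : ∫⁻ ω, ENNReal.ofReal (X (K ω) ω) ∂μ ≤ 1 := by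
    rw [heq]
    calc ∫⁻ ω, Filter.liminf (fun n => ENNReal.ofReal (Y n ω)) atTop ∂μ
        ≤ Filter.liminf (fun n => ∫⁻ ω, ENNReal.ofReal (Y n ω) ∂μ) atTop :=
          lintegral_liminf_le fun n => (hYmeas n).ennreal_ofReal
      _ ≤ 1 := liminf_le_of_frequently_le' (Filter.Frequently.of_forall hYlint)
  have hZmeas : Measurable (fun ω => ENNReal.ofReal (X (K ω) ω)) := by
    rw [heq]
    exact Measurable.liminf fun n => (hYmeas n).ennreal_ofReal
  set c : ENNReal := ENNReal.ofReal (Real.exp (γ ^ 2 * E)) with hcdef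
  have hsub : {ω | (1 - γ) * (K ω : ℝ) ≥ 2 * S (K ω) ω + γ * (1 - γ ^ 2) * (E : ℝ)}
      ⊆ {ω | c ≤ ENNReal.ofReal (X (K ω) ω)} := by
    intro ω hω
    simp only [Set.mem_setOf_eq] at hω ⊢
    rw [hcdef]
    apply ENNReal.ofReal_le_ofReal
    have hXKω : X (K ω) ω = Real.exp (l * ((K ω : ℝ) - 2 * S (K ω) ω - γ * (K ω))) := rfl
    rw [hXKω]
    apply Real.exp_le_exp.2
    have h2 : l * (γ * (1 - γ ^ 2) * (E:ℝ)) = γ ^ 2 * (E:ℝ) := by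
      have h3 : l * (γ * (1 - γ ^ 2) * (E:ℝ)) = (l * (1 - γ ^ 2)) * (γ * (E:ℝ)) := by ring
      rw [h3, hlγ]
      ring
    nlinarith [mul_le_mul_of_nonneg_left hω hl0.le]
  have hmark := mul_meas_ge_le_lintegral₀ (μ := μ) hZmeas.aemeasurable c
  have hcm : c * μ {ω | (1 - γ) * (K ω : ℝ) ≥ 2 * S (K ω) ω + γ * (1 - γ ^ 2) * (E : ℝ)} ≤ 1 :=
    calc c * μ {ω | (1 - γ) * (K ω : ℝ) ≥ 2 * S (K ω) ω + γ * (1 - γ ^ 2) * (E : ℝ)}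
        ≤ c * μ {ω | c ≤ ENNReal.ofReal (X (K ω) ω)} := mul_le_mul_right (measure_mono hsub) c
      _ ≤ ∫⁻ ω, ENNReal.ofReal (X (K ω) ω) ∂μ := hmark
      _ ≤ 1 := hfatou
  have hc0 : c ≠ 0 := by
    rw [hcdef]
    simp [Real.exp_pos]
  have hcinv : μ {ω | (1 - γ) * (K ω : ℝ) ≥ 2 * S (K ω) ω + γ * (1 - γ ^ 2) * (E : ℝ)} ≤ c⁻¹ :=
    ENNReal.le_inv_iff_mul_le.2 (by rwa [mul_comm] at hcm)
  have hfin : c⁻¹ ≠ ⊤ := ENNReal.inv_ne_top.2 hc0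
  calc (μ {ω | (1 - γ) * (K ω : ℝ) ≥ 2 * S (K ω) ω + γ * (1 - γ ^ 2) * (E : ℝ)}).toReal
      ≤ (c⁻¹).toReal := ENNReal.toReal_mono hfin hcinv
    _ = (Real.exp (γ ^ 2 * E))⁻¹ := by
        rw [hcdef, ENNReal.toReal_inv, ENNReal.toReal_ofReal (Real.exp_pos _).le]
    _ = Real.exp (-γ ^ 2 * (E : ℝ)) := by
        rw [show -γ ^ 2 * (E:ℝ) = -(γ ^ 2 * (E:ℝ)) by ring, Real.exp_neg]
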